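/- Global existence and positivity of the characteristic curves (step in the proof of Lemma 3.1). For every z₁ > 0 and every sign ε ∈ {−1, +1}, there exists a differentiable function φ : ℝ → ℝ such that φ(0) = z₁, φ(s) > 0 for all s ∈ ℝ, and φ′(s) = (s + ε·√(s² + 4 φ(s)))/2 for all s ∈ ℝ. -/

import Mathlib

open Real Filter

/-- Auxiliary function for the hodograph transform. -/
noncomputable def charGf (C : ℝ) (w : ℝ) : ℝ := 2/3 * Real.exp w - C * Real.exp (-(w/2))

lemma charGf_hasDerivAt (C w : ℝ) :
    HasDerivAt (charGf C) (2/3 * Real.exp w + C/2 * Real.exp (-(w/2))) w := by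
  have h2 : HasDerivAt (fun w : ℝ => -(w/2)) (-(1/2)) w := by
    simpa using ((hasDerivAt_id w).div_const 2).fun_neg
  have h3 : HasDerivAt (fun w : ℝ => Real.exp (-(w/2))) (Real.exp (-(w/2)) * (-(1/2))) w :=
    (Real.hasDerivAt_exp _).comp w h2
  have := ((Real.hasDerivAt_exp w).const_mul (2/3 : ℝ)).fun_sub (h3.const_mul C)
  exact this.congr_deriv (by ring)

lemma charGf_strictMono {C : ℝ} (hC : 0 < C) : StrictMono (charGf C) := by
  intro a b hab
  have h1 : Real.exp a < Real.exp b := Real.exp_lt_exp.2 hab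
  have h2 : Real.exp (-(b/2)) < Real.exp (-(a/2)) := Real.exp_lt_exp.2 (by linarith)
  have := mul_lt_mul_of_pos_left h2 hC
  unfold charGf
  nlinarith

lemma charGf_surjective {C : ℝ} (hC : 0 < C) : Function.Surjective (charGf C) := by
  have hcont : Continuous (charGf C) := by
    unfold charGf
    fun_prop
  apply hcont.surjective
  · -- atTop
    have h1 : Tendsto (fun w : ℝ => 2/3 * Real.exp w) atTop atTop :=
      Real.tendsto_exp_atTop.const_mul_atTop (by norm_num)
    have h2 : Tendsto (fun w : ℝ => -(w/2)) atTop atBot := by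
      apply tendsto_neg_atTop_atBot.comp
      exact tendsto_id.atTop_div_const (by norm_num)
    have h3 : Tendsto (fun w : ℝ => C * Real.exp (-(w/2))) atTop (nhds (C * 0)) :=
      (Real.tendsto_exp_atBot.comp h2).const_mul C
    have := h1.atTop_add (by simpa using h3.neg)
    show Tendsto (fun w => charGf C w) atTop atTop
    simpa [charGf, sub_eq_add_neg] using this
  · -- atBot
    have h1 : Tendsto (fun w : ℝ => 2/3 * Real.exp w) atBot (nhds (2/3 * 0)) :=
      Real.tendsto_exp_atBot.const_mul (2/3 : ℝ)
    have h2 : Tendsto (fun w : ℝ => -(w/2)) atBot atTop := by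
      apply tendsto_neg_atBot_atTop.comp
      exact tendsto_id.atBot_div_const (by norm_num)
    have h3 : Tendsto (fun w : ℝ => C * Real.exp (-(w/2))) atBot atTop :=
      (Real.tendsto_exp_atTop.comp h2).const_mul_atTop hC
    have h4 : Tendsto (fun w : ℝ => -(C * Real.exp (-(w/2)))) atBot atBot :=
      tendsto_neg_atTop_atBot.comp h3
    have := Filter.Tendsto.add_atBot h1 h4
    show Tendsto (fun w => charGf C w) atBot atBot
    simpa [charGf, sub_eq_add_neg] using this

/-- **Step in the proof of Lemma 3.1** (Global existence and positivity of the characteristic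
curves). For every `z₁ > 0` and every sign `ε ∈ {−1, +1}`, there is a globally defined,
everywhere positive solution `φ` of `φ′(s) = (s + ε √(s² + 4φ(s)))/2` with `φ(0) = z₁`. -/
theorem characteristic_curves_global_exist_pos
    (z₁ : ℝ) (hz₁ : 0 < z₁) (ε : ℝ) (hε : ε = -1 ∨ ε = 1) :
    ∃ φ : ℝ → ℝ, φ 0 = z₁ ∧ (∀ s : ℝ, 0 < φ s) ∧
      ∀ s : ℝ, HasDerivAt φ ((s + ε * Real.sqrt (s ^ 2 + 4 * φ s)) / 2) s := by
  have hε2 : ε * ε = 1 := by rcases hε with h | h <;> rw [h] <;> norm_num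
  set r := Real.sqrt z₁ with hrdef
  have hr0 : 0 < r := Real.sqrt_pos.2 hz₁
  set q := Real.sqrt r with hqdef
  have hq0 : 0 < q := Real.sqrt_pos.2 hr0
  have hq2 : q * q = r := Real.mul_self_sqrt hr0.le
  have hr2 : r * r = z₁ := Real.mul_self_sqrt hz₁.le
  set C : ℝ := 2/3 * r * q with hCdef
  have hC : 0 < C := by positivity
  set e : ℝ ≃o ℝ :=
    StrictMono.orderIsoOfSurjective _ (charGf_strictMono hC) (charGf_surjective hC) with hedef
  have hecoe : ∀ x : ℝ, e x = charGf C x := fun x => rfl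
  have heW : ∀ y : ℝ, charGf C (e.symm y) = y := fun y => e.apply_symm_apply y
  have hWcont : Continuous (fun y : ℝ => (e.symm y : ℝ)) := e.symm.continuous
  refine ⟨fun s => Real.exp (e.symm (ε * s) / 2) ^ 4 / 3 + C * Real.exp (e.symm (ε * s) / 2),
    ?_, ?_, ?_⟩
  · -- initial value
    have hlog : e.symm (0 : ℝ) = Real.log r := by
      rw [OrderIso.symm_apply_eq, hecoe]
      have h1 : Real.exp (Real.log r) = r := Real.exp_log hr0
      have h2 : Real.exp (-(Real.log r / 2)) = q⁻¹ := by
        rw [← Real.log_sqrt hr0.le, ← hqdef, Real.exp_neg, Real.exp_log hq0]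
      rw [charGf, h1, h2]
      field_simp
      nlinarith
    have hq' : Real.exp (Real.log r / 2) = q := by
      rw [← Real.log_sqrt hr0.le, ← hqdef, Real.exp_log hq0]
    simp only [mul_zero, hlog, hq']
    nlinarith
  · intro s; positivity
  · intro s
    set w : ℝ := e.symm (ε * s) with hwdef
    set a : ℝ := Real.exp (w / 2) with hadef
    have ha0 : 0 < a := Real.exp_pos _
    have haw : Real.exp w = a ^ 2 := by
      rw [hadef, sq, ← Real.exp_add]
      norm_num
    have hanw : Real.exp (-(w/2)) = a⁻¹ := by rw [Real.exp_neg, hadef]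
    have hGw : charGf C w = ε * s := heW (ε * s)
    have hsval : s = ε * (2/3 * a^2 - C * a⁻¹) := by
      have : ε * (ε * s) = ε * charGf C w := by rw [hGw]
      rw [← mul_assoc, hε2, one_mul] at this
      rw [this, charGf, haw, hanw]
    -- derivative of G at w
    have hG' : 0 < 2/3 * Real.exp w + C/2 * Real.exp (-(w/2)) := by positivity
    have hWd : HasDerivAt (fun y : ℝ => (e.symm y : ℝ))
        (2/3 * Real.exp w + C/2 * Real.exp (-(w/2)))⁻¹ (ε * s) := by
      refine HasDerivAt.of_local_left_inverse (hWcont.continuousAt)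
        ?_ hG'.ne' (Filter.Eventually.of_forall heW)
      exact charGf_hasDerivAt C _
    set D : ℝ := (2/3 * Real.exp w + C/2 * Real.exp (-(w/2)))⁻¹ with hDdef
    have hinner : HasDerivAt (fun s : ℝ => ε * s) ε s := by
      simpa using (hasDerivAt_id s).const_mul ε
    have hu : HasDerivAt (fun t : ℝ => (e.symm (ε * t) : ℝ)) (D * ε) s :=
      HasDerivAt.comp s hWd hinner
    have hd1 : HasDerivAt (fun t : ℝ => (e.symm (ε * t) : ℝ) / 2) (D * ε / 2) s :=
      hu.div_const 2
    have hd2 : HasDerivAt (fun t : ℝ => Real.exp (e.symm (ε * t) / 2))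
        (a * (D * ε / 2)) s := by
      have := (Real.hasDerivAt_exp (w/2)).comp s hd1
      simpa [← hadef, ← hwdef, Function.comp_def] using this
    have hd3 : HasDerivAt (fun t : ℝ => Real.exp (e.symm (ε * t) / 2) ^ 4)
        ((4 : ℕ) * a ^ 3 * (a * (D * ε / 2))) s := by
      have := hd2.fun_pow 4
      simpa [← hadef, ← hwdef] using this
    have hd : HasDerivAt
        (fun t : ℝ => Real.exp (e.symm (ε * t) / 2) ^ 4 / 3 + C * Real.exp (e.symm (ε * t) / 2))
        ((4 : ℕ) * a ^ 3 * (a * (D * ε / 2)) / 3 + C * (a * (D * ε / 2))) s :=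
      (hd3.div_const 3).add (hd2.const_mul C)
    -- simplify the derivative value
    have hval : (4 : ℕ) * a ^ 3 * (a * (D * ε / 2)) / 3 + C * (a * (D * ε / 2)) = ε * a ^ 2 := by
      rw [hDdef, haw, hanw]
      have h1 : (2/3 * a^2 + C/2 * a⁻¹) ≠ 0 := by positivity
      field_simp
      ring
    -- the sqrt
    have hφs : Real.exp (e.symm (ε * s) / 2) ^ 4 / 3 + C * Real.exp (e.symm (ε * s) / 2)
        = a ^ 4 / 3 + C * a := by rw [← hwdef, ← hadef]
    have hs2 : s ^ 2 = (2/3 * a^2 - C * a⁻¹) ^ 2 := by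
      rw [hsval, mul_pow, show ε ^ 2 = 1 by rw [sq, hε2], one_mul]
    have hsq : s ^ 2 + 4 * (a ^ 4 / 3 + C * a) = (4/3 * a^2 + C * a⁻¹) ^ 2 := by
      rw [hs2]
      have : a ≠ 0 := ha0.ne'
      field_simp
      ring
    have hsqrt : Real.sqrt (s ^ 2 + 4 * (a ^ 4 / 3 + C * a)) = 4/3 * a^2 + C * a⁻¹ := by
      rw [hsq]
      exact Real.sqrt_sq (by positivity)
    have hrhs : (s + ε * Real.sqrt (s ^ 2 + 4 * (a ^ 4 / 3 + C * a))) / 2 = ε * a ^ 2 := by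
      rw [hsqrt, hsval]
      field_simp
      ring
    beta_reduce
    rw [hφs, hrhs, ← hval]
    exact hd
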